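/- There is an absolute constant C such that for every integer c ≥ 0 there exists a DFA over the alphabet {0,1} with at most C·(log₂(c+1)+1) states accepting exactly the language { x ∈ {0,1}* : x is a valid Fibonacci representation and [x] = c }. -/

import Mathlib

def fibVal : List Bool → ℕ
  | [] => 0
  | a :: rest => (if a then Nat.fib (rest.length + 2) else 0) + fibVal rest

def ValidFib (w : List Bool) : Prop :=
  w.Chain' (fun a b => a = false ∨ b = false)

lemma fibVal_false (rest : List Bool) : fibVal (false :: rest) = fibVal rest := by
  simp [fibVal]

lemma fibVal_true (rest : List Bool) :
    fibVal (true :: rest) = Nat.fib (rest.length + 2) + fibVal rest := by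
  simp [fibVal]

lemma fib_step (k : ℕ) : Nat.fib (k + 2) = Nat.fib (k + 1) + Nat.fib k := by
  rw [Nat.fib_add_two]; omega

lemma validFib_cons_false {w : List Bool} (h : ValidFib w) : ValidFib (false :: w) := by
  rw [ValidFib, List.Chain', List.isChain_cons]
  exact ⟨fun y _ => Or.inl rfl, h⟩

lemma ValidFib.tail' {a : Bool} {w : List Bool} (h : ValidFib (a :: w)) : ValidFib w :=
  List.IsChain.tail h

lemma fibVal_lt : ∀ w : List Bool, ValidFib w → fibVal w < Nat.fib (w.length + 2)
  | [], _ => by simp [fibVal]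
  | false :: rest, h => by
      have ih := fibVal_lt rest h.tail'
      rw [fibVal_false]
      simp only [List.length_cons]
      have hm : Nat.fib (rest.length + 2) ≤ Nat.fib (rest.length + 1 + 2) := Nat.fib_mono (by omega)
      omega
  | [true], _ => by norm_num [fibVal, Nat.fib]
  | true :: true :: rest, h => by
      rw [ValidFib, List.Chain', List.isChain_cons_cons] at h
      simp at h
  | true :: false :: rest, h => by
      have ih := fibVal_lt rest h.tail'.tail'
      rw [fibVal_true, fibVal_false]
      simp only [List.length_cons]
      have h2 : Nat.fib (rest.length + 1 + 1 + 2)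
          = Nat.fib (rest.length + 1 + 2) + Nat.fib (rest.length + 2) := fib_step _
      omega

lemma valid_eq_of_fibVal_eq : ∀ u v : List Bool, ValidFib u → ValidFib v →
    u.length = v.length → fibVal u = fibVal v → u = v
  | [], [], _, _, _, _ => rfl
  | [], _ :: _, _, _, hl, _ => by simp at hl
  | _ :: _, [], _, _, hl, _ => by simp at hl
  | a :: u, b :: v, hu, hv, hl, hval => by
      simp only [List.length_cons, Nat.add_right_cancel_iff] at hl
      have key : a = b := by
        rcases a <;> rcases b
        · rfl
        · exfalso
          have h1 := fibVal_lt u hu.tail'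
          rw [fibVal_false, fibVal_true] at hval
          rw [hl] at h1
          omega
        · exfalso
          have h1 := fibVal_lt v hv.tail'
          rw [fibVal_true, fibVal_false] at hval
          rw [hl] at hval
          omega
        · rfl
      subst key
      have : fibVal u = fibVal v := by
        cases a with
        | false => rwa [fibVal_false, fibVal_false] at hval
        | true =>
            rw [fibVal_true, fibVal_true, hl] at hval
            omega
      rw [valid_eq_of_fibVal_eq u v hu.tail' hv.tail' hl this]

/-- Greedy Zeckendorf word of length `n` for value `c` (requires `c < fib (n+2)`). -/
def zlen : ℕ → ℕ → List Bool
  | 0, _ => []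
  | n + 1, c =>
      if Nat.fib (n + 2) ≤ c then true :: zlen n (c - Nat.fib (n + 2))
      else false :: zlen n c

lemma zlen_length : ∀ n c, (zlen n c).length = n
  | 0, _ => rfl
  | n + 1, c => by
      rw [zlen]
      split <;> simp [zlen_length n]

lemma zlen_fibVal : ∀ n c, c < Nat.fib (n + 2) → fibVal (zlen n c) = c
  | 0, c, h => by
      interval_cases c
      rfl
  | n + 1, c, h => by
      rw [zlen]
      have hfib : Nat.fib (n + 1 + 2) = Nat.fib (n + 2) + Nat.fib (n + 1) := fib_step _
      split
      · next hle =>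
        have h1 : c - Nat.fib (n + 2) < Nat.fib (n + 2) := by
          have : Nat.fib (n + 1) ≤ Nat.fib (n + 2) := Nat.fib_mono (by omega)
          omega
        rw [fibVal_true, zlen_length, zlen_fibVal n _ h1]
        omega
      · next hle =>
        rw [fibVal_false, zlen_fibVal n c (by omega)]

lemma zlen_head_false : ∀ n c, c < Nat.fib (n + 1) → ∀ b ∈ (zlen n c).head?, b = false
  | 0, c, _ => by simp [zlen]
  | n + 1, c, h => by
      have h' : c < Nat.fib (n + 2) := h
      rw [zlen, if_neg (by omega)]
      simp

lemma zlen_valid : ∀ n c, c < Nat.fib (n + 2) → ValidFib (zlen n c)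
  | 0, _, _ => List.isChain_nil
  | n + 1, c, h => by
      rw [zlen]
      have hfib : Nat.fib (n + 1 + 2) = Nat.fib (n + 2) + Nat.fib (n + 1) := fib_step _
      split
      · next hle =>
        rw [ValidFib, List.Chain', List.isChain_cons]
        constructor
        · intro y hy
          exact Or.inr (zlen_head_false n _ (by omega) y hy)
        · exact zlen_valid n _ (by
            have : Nat.fib (n + 1) ≤ Nat.fib (n + 2) := Nat.fib_mono (by omega)
            omega)
      · next hle =>
        rw [ValidFib, List.Chain', List.isChain_cons]
        exact ⟨fun y _ => Or.inl rfl, zlen_valid n c (by omega)⟩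

lemma zlen_head_true (n c : ℕ) (h : Nat.fib (n + 2) ≤ c) :
    ∀ b ∈ (zlen (n + 1) c).head?, b = true := by
  rw [zlen, if_pos h]
  simp

/-- The matching DFA for `0^* z`. -/
def matchDFA (z : List Bool) : DFA Bool (Option (Fin (z.length + 1))) where
  step q b :=
    match q with
    | none => none
    | some i =>
        if hlt : (i : ℕ) < z.length then
          if z[(i : ℕ)] = b then some ⟨(i : ℕ) + 1, by omega⟩
          else if (i : ℕ) = 0 ∧ b = false then some i else none
        else if (i : ℕ) = 0 ∧ b = false then some i else none
  start := some ⟨0, by omega⟩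
  accept := {some ⟨z.length, by omega⟩}

lemma matchDFA_none (z : List Bool) : ∀ w, (matchDFA z).evalFrom none w = none := by
  intro w
  induction w with
  | nil => rfl
  | cons a w ih => exact ih

lemma matchDFA_evalFrom_pos (z : List Bool) :
    ∀ (w : List Bool) (i : ℕ) (h : i ≤ z.length), 0 < i →
      ((matchDFA z).evalFrom (some ⟨i, by omega⟩) w = some ⟨z.length, by omega⟩ ↔
        w = z.drop i) := by
  intro w
  induction w with
  | nil =>
      intro i h hpos
      simp only [DFA.evalFrom, List.foldl_nil]
      constructor
      · intro he
        simp only [Option.some.injEq, Fin.mk.injEq] at he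
        rw [(List.drop_eq_nil_iff).mpr (by omega)]
      · intro he
        have : z.length ≤ i := List.drop_eq_nil_iff.mp he.symm
        simp only [Option.some.injEq, Fin.mk.injEq]
        omega
  | cons b w ih =>
      intro i h hpos
      have hstep : (matchDFA z).evalFrom (some ⟨i, by omega⟩) (b :: w)
          = (matchDFA z).evalFrom ((matchDFA z).step (some ⟨i, by omega⟩) b) w := rfl
      rw [hstep]
      by_cases hlt : i < z.length
      · by_cases hzb : z[i] = b
        · have : (matchDFA z).step (some ⟨i, by omega⟩) b = some ⟨i + 1, by omega⟩ := by
            simp [matchDFA, hlt, hzb]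
          rw [this, ih (i + 1) (by omega) (by omega)]
          rw [← List.getElem_cons_drop (as := z) (i := i) hlt, hzb]
          simp
        · have : (matchDFA z).step (some ⟨i, by omega⟩) b = none := by
            simp [matchDFA, hlt, hzb]
            omega
          rw [this, matchDFA_none]
          constructor
          · intro he; simp at he
          · intro he
            rw [← List.getElem_cons_drop (as := z) (i := i) hlt] at he
            simp only [List.cons.injEq] at he
            exact absurd he.1.symm hzb
      · have hi : i = z.length := by omega
        have : (matchDFA z).step (some ⟨i, by omega⟩) b = none := by
          simp [matchDFA, hlt]
          omega
        rw [this, matchDFA_none]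
        constructor
        · intro he; simp at he
        · intro he
          rw [List.drop_eq_nil_iff.mpr (by omega)] at he
          simp at he

lemma matchDFA_evalFrom_zero (z : List Bool) (hz : ∀ b ∈ z.head?, b = true) :
    ∀ w : List Bool,
      ((matchDFA z).evalFrom (some ⟨0, by omega⟩) w = some ⟨z.length, by omega⟩ ↔
        ∃ k, w = List.replicate k false ++ z) := by
  intro w
  induction w with
  | nil =>
      simp only [DFA.evalFrom, List.foldl_nil]
      constructor
      · intro he
        simp only [Option.some.injEq, Fin.mk.injEq] at he
        refine ⟨0, ?_⟩
        simp [List.length_eq_zero_iff.mp he.symm]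
      · rintro ⟨k, hk⟩
        have hlen : z.length = 0 ∧ k = 0 := by
          have := congrArg List.length hk
          simp at this
          omega
        simp only [Option.some.injEq, Fin.mk.injEq]
        omega
  | cons b w ih =>
      have hstep : (matchDFA z).evalFrom (some ⟨0, by omega⟩) (b :: w)
          = (matchDFA z).evalFrom ((matchDFA z).step (some ⟨0, by omega⟩) b) w := rfl
      rw [hstep]
      by_cases hlt : 0 < z.length
      · obtain ⟨t, hzc⟩ : ∃ t, z = true :: t := by
          cases z with
          | nil => simp at hlt
          | cons a t =>
              have : a = true := hz a (by simp)
              exact ⟨t, by rw [this]⟩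
        have hz0 : z[0]'hlt = true := by
          subst hzc; rfl
        cases b with
        | true =>
            have hst : (matchDFA z).step (some ⟨0, by omega⟩) true = some ⟨1, by omega⟩ := by
              simp [matchDFA, hlt, hz0]
            rw [hst, matchDFA_evalFrom_pos z w 1 (by omega) (by omega)]
            have hdrop : z.drop 1 = t := by rw [hzc]; rfl
            rw [hdrop]
            constructor
            · intro he
              exact ⟨0, by simp [hzc, he]⟩
            · rintro ⟨k, hk⟩
              cases k with
              | zero =>
                  rw [hzc] at hk
                  simpa using hk
              | succ k =>
                  rw [List.replicate_succ] at hk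
                  simp at hk
        | false =>
            have hst : (matchDFA z).step (some ⟨0, by omega⟩) false
                = some ⟨0, by omega⟩ := by
              have hne : z[0]'hlt ≠ false := by simp [hz0]
              simp [matchDFA, hlt, hne]
            rw [hst, ih]
            constructor
            · rintro ⟨k, hk⟩
              exact ⟨k + 1, by simp [List.replicate_succ, hk]⟩
            · rintro ⟨k, hk⟩
              cases k with
              | zero =>
                  exfalso
                  rw [hzc] at hk
                  simp at hk
              | succ k =>
                  rw [List.replicate_succ] at hk
                  simp only [List.cons_append, List.cons.injEq] at hk
                  exact ⟨k, hk.2⟩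
      · have hzn : z = [] := List.length_eq_zero_iff.mp (by omega)
        subst hzn
        cases b with
        | false =>
            have hst : (matchDFA ([] : List Bool)).step (some ⟨0, by omega⟩) false
                = some ⟨0, by omega⟩ := by
              simp [matchDFA]
            rw [hst, ih]
            constructor
            · rintro ⟨k, hk⟩
              exact ⟨k + 1, by simp [List.replicate_succ, hk]⟩
            · rintro ⟨k, hk⟩
              cases k with
              | zero => simp at hk
              | succ k =>
                  rw [List.replicate_succ] at hk
                  simp only [List.append_nil, List.cons.injEq] at hk
                  exact ⟨k, by simp [hk.2]⟩
        | true =>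
            have hst : (matchDFA ([] : List Bool)).step (some ⟨0, by omega⟩) true = none := by
              simp [matchDFA]
            rw [hst, matchDFA_none]
            constructor
            · intro he; simp at he
            · rintro ⟨k, hk⟩
              simp only [List.append_nil] at hk
              cases k with
              | zero => simp at hk
              | succ k =>
                  rw [List.replicate_succ] at hk
                  simp at hk

lemma matchDFA_accepts (z : List Bool) (hz : ∀ b ∈ z.head?, b = true) (w : List Bool) :
    w ∈ (matchDFA z).accepts ↔ ∃ k, w = List.replicate k false ++ z := by
  rw [DFA.mem_accepts]
  have h1 : (matchDFA z).eval w = (matchDFA z).evalFrom (some ⟨0, by omega⟩) w := rfl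
  have h2 : ∀ q, q ∈ (matchDFA z).accept ↔ q = some ⟨z.length, by omega⟩ := fun q =>
    Set.mem_singleton_iff
  rw [h1, h2, matchDFA_evalFrom_zero z hz w]

lemma fibVal_replicate_append (k : ℕ) (z : List Bool) :
    fibVal (List.replicate k false ++ z) = fibVal z := by
  induction k with
  | zero => rfl
  | succ k ih =>
      rw [List.replicate_succ, List.cons_append, fibVal_false]
      exact ih

lemma valid_replicate_append (k : ℕ) (z : List Bool) (h : ValidFib z) :
    ValidFib (List.replicate k false ++ z) := by
  induction k with
  | zero => exact h
  | succ k ih =>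
      rw [List.replicate_succ, List.cons_append]
      exact validFib_cons_false ih

lemma two_pow_le_fib : ∀ m, 2 ^ (m / 2) ≤ Nat.fib (m + 1)
  | 0 => by norm_num
  | 1 => by norm_num [Nat.fib]
  | m + 2 => by
      have ih := two_pow_le_fib m
      have h1 : Nat.fib (m + 1) ≤ Nat.fib (m + 2) := Nat.fib_mono (by omega)
      have h2 : Nat.fib (m + 3) = Nat.fib (m + 2) + Nat.fib (m + 1) := fib_step _
      have h3 : (m + 2) / 2 = m / 2 + 1 := by omega
      show 2 ^ ((m + 2) / 2) ≤ Nat.fib (m + 3)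
      rw [h3, pow_succ]
      omega

lemma self_lt_fib (c : ℕ) : c < Nat.fib (c + 2) := by
  induction c with
  | zero => norm_num
  | succ c ih =>
      have h2 : Nat.fib (c + 3) = Nat.fib (c + 2) + Nat.fib (c + 1) := fib_step _
      have h3 : 1 ≤ Nat.fib (c + 1) := Nat.fib_pos.mpr (by omega)
      show c + 1 < Nat.fib (c + 3)
      omega

theorem eq_const_state_complexity :
    ∃ C : ℕ, ∀ c : ℕ, ∃ (σ : Type) (_ : Fintype σ) (M : DFA Bool σ),
      Fintype.card σ ≤ C * (Nat.log 2 (c + 1) + 1) ∧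
      ∀ w : List Bool, w ∈ M.accepts ↔ ValidFib w ∧ fibVal w = c := by
  refine ⟨4, fun c => ?_⟩
  have hex : ∃ n, c < Nat.fib (n + 2) := ⟨c, self_lt_fib c⟩
  set n := Nat.find hex with hn
  have hlt : c < Nat.fib (n + 2) := Nat.find_spec hex
  set z := zlen n c with hzdef
  have hlen : z.length = n := zlen_length n c
  have hzval : fibVal z = c := zlen_fibVal n c hlt
  have hzvalid : ValidFib z := zlen_valid n c hlt
  have hzhead : ∀ b ∈ z.head?, b = true := by
    intro b hb
    cases hn0 : n with
    | zero =>
        have : z = [] := List.length_eq_zero_iff.mp (by omega)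
        rw [this] at hb; simp at hb
    | succ m =>
        have hmin : ¬ c < Nat.fib (m + 2) := Nat.find_min hex (by omega)
        rw [hzdef, hn0] at hb
        exact zlen_head_true m c (by omega) b hb
  refine ⟨Option (Fin (z.length + 1)), inferInstance, matchDFA z, ?_, ?_⟩
  · -- cardinality bound
    have hcard : Fintype.card (Option (Fin (z.length + 1))) = n + 2 := by
      simp [hlen]
    rw [hcard]
    rcases Nat.eq_zero_or_pos n with h0 | hpos
    · omega
    · have hmin : ¬ c < Nat.fib (n - 1 + 2) := Nat.find_min hex (by omega)
      have hfibc : Nat.fib (n + 1) ≤ c := by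
        have e : n - 1 + 2 = n + 1 := by omega
        rw [e] at hmin
        omega
      have hp : 2 ^ (n / 2) ≤ c := le_trans (two_pow_le_fib n) hfibc
      have hlog : n / 2 ≤ Nat.log 2 (c + 1) :=
        (Nat.le_log_iff_pow_le (by norm_num) (by omega)).mpr (by omega)
      omega
  · intro w
    rw [matchDFA_accepts z hzhead w]
    constructor
    · rintro ⟨k, hk⟩
      subst hk
      exact ⟨valid_replicate_append k z hzvalid, by rw [fibVal_replicate_append, hzval]⟩
    · rintro ⟨hw, hwval⟩
      have hwlt : c < Nat.fib (w.length + 2) := hwval ▸ fibVal_lt w hw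
      have hnle : n ≤ w.length := Nat.find_min' hex hwlt
      refine ⟨w.length - n, ?_⟩
      apply valid_eq_of_fibVal_eq w _ hw (valid_replicate_append _ z hzvalid)
      · simp [hlen]; omega
      · rw [fibVal_replicate_append, hzval, hwval]
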